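/- Let E be a real Hilbert space, let γ : E → ℝ be convex and differentiable with α-Lipschitz gradient for some α > 0, and let φ : E → ℝ be convex. Let ε ≥ 0, μ ≥ 0, and h, h⁻ ∈ E; set h̃ = h + μ(h − h⁻) and z = h̃ − (1/α)∇γ(h̃). Suppose h⁺ ∈ E and δ ∈ E satisfy ‖δ‖ ≤ √(2ε/α) and, for all y ∈ E, φ(y) ≥ φ(h⁺) + ⟪α(z − h⁺ − δ), y − h⁺⟫ − ε. Then γ(h⁺) + φ(h⁺) − (γ(h) + φ(h)) ≤ √(2αε)·‖h⁺ − h‖ − (α/2)‖h⁺ − h‖² + (α/2)μ²‖h − h⁻‖² + ε. -/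

import Mathlib

open scoped RealInnerProductSpace

section Aux

variable {E : Type*} [NormedAddCommGroup E] [InnerProductSpace ℝ E] [CompleteSpace E]

/-- Derivative of a smooth function along a line. -/
lemma aux_line_hasDerivAt {γ : E → ℝ} {γ' : E → E}
    (hd : ∀ u : E, HasGradientAt γ (γ' u) u) (x v : E) (t : ℝ) :
    HasDerivAt (fun s : ℝ => γ (x + s • v)) ⟪γ' (x + t • v), v⟫ t := by
  have hL : HasDerivAt (fun s : ℝ => x + s • v) v t := by
    simpa using ((hasDerivAt_id t).smul_const v).const_add x
  have hF : HasFDerivAt γ (InnerProductSpace.toDual ℝ E (γ' (x + t • v))) (x + t • v) :=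
    hasGradientAt_iff_hasFDerivAt.mp (hd _)
  simpa [InnerProductSpace.toDual_apply_apply, Function.comp_def] using hF.comp_hasDerivAt t hL

/-- Convexity: the tangent plane lies below the graph. -/
lemma aux_convex_tangent {γ : E → ℝ} {γ' : E → E}
    (hcv : ConvexOn ℝ Set.univ γ) (hd : ∀ u : E, HasGradientAt γ (γ' u) u) (x y : E) :
    γ x + ⟪γ' x, y - x⟫ ≤ γ y := by
  set v := y - x with hv
  set g : ℝ → ℝ := fun s => γ (x + s • v) with hg
  have hgc : ConvexOn ℝ Set.univ g := by
    refine ⟨convex_univ, fun t₁ _ t₂ _ a b ha hb hab => ?_⟩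
    have hpt : x + (a • t₁ + b • t₂) • v = a • (x + t₁ • v) + b • (x + t₂ • v) := by
      have h1 : x + (a • t₁ + b • t₂) • v = (a + b) • x + (a • t₁ + b • t₂) • v := by
        rw [hab, one_smul]
      rw [h1, smul_eq_mul, smul_eq_mul, add_smul, add_smul, mul_smul, mul_smul,
        smul_add a x (t₁ • v), smul_add b x (t₂ • v)]
      abel
    simp only [hg, smul_eq_mul]
    rw [show x + (a * t₁ + b * t₂) • v = a • (x + t₁ • v) + b • (x + t₂ • v) from hpt]
    exact hcv.2 (Set.mem_univ (x + t₁ • v)) (Set.mem_univ (x + t₂ • v)) ha hb hab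
  have hder : HasDerivAt g ⟪γ' x, v⟫ 0 := by
    have := aux_line_hasDerivAt hd x v 0
    simpa using this
  have hslope := hgc.le_slope_of_hasDerivAt (Set.mem_univ (0 : ℝ)) (Set.mem_univ (1 : ℝ))
    zero_lt_one hder
  have hs : slope g 0 1 = γ y - γ x := by
    simp [slope_def_field, hg, hv]
  rw [hs] at hslope
  linarith

/-- Descent lemma for functions with Lipschitz gradient. -/
lemma aux_descent {γ : E → ℝ} {γ' : E → E} {α : ℝ} (hα : 0 < α)
    (hd : ∀ u : E, HasGradientAt γ (γ' u) u)
    (hlip : ∀ u v : E, ‖γ' u - γ' v‖ ≤ α * ‖u - v‖) (x y : E) :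
    γ y ≤ γ x + ⟪γ' x, y - x⟫ + α / 2 * ‖y - x‖ ^ 2 := by
  set v := y - x with hv
  set ψ : ℝ → ℝ := fun t => γ (x + t • v) - t * ⟪γ' x, v⟫ - α / 2 * t ^ 2 * ‖v‖ ^ 2 with hψ
  have hder : ∀ t : ℝ, HasDerivAt ψ
      (⟪γ' (x + t • v), v⟫ - ⟪γ' x, v⟫ - α * t * ‖v‖ ^ 2) t := by
    intro t
    have h1 := aux_line_hasDerivAt hd x v t
    have h2 : HasDerivAt (fun s : ℝ => s * ⟪γ' x, v⟫) ⟪γ' x, v⟫ t := by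
      simpa using (hasDerivAt_id t).mul_const ⟪γ' x, v⟫
    have h3 : HasDerivAt (fun s : ℝ => α / 2 * s ^ 2 * ‖v‖ ^ 2) (α * t * ‖v‖ ^ 2) t := by
      have := ((hasDerivAt_pow 2 t).const_mul (α / 2)).mul_const (‖v‖ ^ 2)
      exact this.congr_deriv (by ring_nf)
    rw [hψ]; exact (h1.sub h2).sub h3
  have hmono : AntitoneOn ψ (Set.Icc (0 : ℝ) 1) := by
    apply antitoneOn_of_deriv_nonpos (convex_Icc 0 1)
    · exact fun t _ => ((hder t).continuousAt).continuousWithinAt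
    · exact fun t _ => ((hder t).differentiableAt).differentiableWithinAt
    · intro t ht
      rw [interior_Icc] at ht
      rw [(hder t).deriv]
      have hbound : ⟪γ' (x + t • v) - γ' x, v⟫ ≤ α * t * ‖v‖ ^ 2 := by
        calc ⟪γ' (x + t • v) - γ' x, v⟫ ≤ ‖γ' (x + t • v) - γ' x‖ * ‖v‖ :=
              real_inner_le_norm _ _
          _ ≤ (α * ‖(x + t • v) - x‖) * ‖v‖ := by
              have := hlip (x + t • v) x
              exact mul_le_mul_of_nonneg_right this (norm_nonneg _)
          _ = α * t * ‖v‖ ^ 2 := by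
              rw [add_sub_cancel_left, norm_smul, Real.norm_eq_abs, abs_of_pos ht.1]
              ring
      rw [inner_sub_left] at hbound
      linarith
  have hkey := hmono (Set.mem_Icc.mpr ⟨le_refl 0, zero_le_one⟩)
    (Set.mem_Icc.mpr ⟨zero_le_one, le_refl 1⟩) zero_le_one
  simp only [hψ, zero_smul, add_zero, one_smul, zero_mul, mul_zero, sub_zero,
    zero_pow, one_pow, mul_one, one_mul] at hkey
  rw [hv] at hkey ⊢
  have hy : x + (y - x) = y := by abel
  rw [hy] at hkey
  linarith

end Aux

/-- Per-iteration descent inequality for the inexact accelerated proximal-gradient update. -/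
theorem stmt2 {E : Type*} [NormedAddCommGroup E] [InnerProductSpace ℝ E] [CompleteSpace E]
    (γ φ : E → ℝ) (γ' : E → E) (α : ℝ) (hα : 0 < α)
    (hγcv : ConvexOn ℝ Set.univ γ)
    (hγd : ∀ u : E, HasGradientAt γ (γ' u) u)
    (hγlip : ∀ u v : E, ‖γ' u - γ' v‖ ≤ α * ‖u - v‖)
    (hφcv : ConvexOn ℝ Set.univ φ)
    (ε : ℝ) (hε : 0 ≤ ε) (μ : ℝ) (hμ : 0 ≤ μ)
    (h hm : E) (htld z : E)
    (htld_def : htld = h + μ • (h - hm))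
    (hz_def : z = htld - α⁻¹ • γ' htld)
    (hp δ : E) (hδ : ‖δ‖ ≤ Real.sqrt (2 * ε / α))
    (hsub : ∀ y : E, φ y ≥ φ hp + ⟪α • (z - hp - δ), y - hp⟫ - ε) :
    γ hp + φ hp - (γ h + φ h) ≤
      Real.sqrt (2 * α * ε) * ‖hp - h‖ - α / 2 * ‖hp - h‖ ^ 2
        + α / 2 * μ ^ 2 * ‖h - hm‖ ^ 2 + ε := by
  have hαne : α ≠ 0 := ne_of_gt hα
  -- convexity of γ at htld vs h
  have hA : γ htld + ⟪γ' htld, h - htld⟫ ≤ γ h := aux_convex_tangent hγcv hγd htld h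
  -- descent lemma
  have hB : γ hp ≤ γ htld + ⟪γ' htld, hp - htld⟫ + α / 2 * ‖hp - htld‖ ^ 2 :=
    aux_descent hα hγd hγlip htld hp
  -- ε-subgradient at h
  have hC := hsub h
  -- expand the subgradient inner product
  have hCexp : ⟪α • (z - hp - δ), h - hp⟫
      = α * ⟪htld - hp, h - hp⟫ - ⟪γ' htld, h - hp⟫ - α * ⟪δ, h - hp⟫ := by
    rw [hz_def, real_inner_smul_left]
    have : htld - α⁻¹ • γ' htld - hp - δ = (htld - hp) - α⁻¹ • γ' htld - δ := by abel
    rw [this, inner_sub_left, inner_sub_left, real_inner_smul_left]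
    field_simp
  -- norm expansion: ‖htld - h‖² = ‖htld - hp‖² + 2⟪htld-hp, hp-h⟫ + ‖hp-h‖²
  have hnorm : ‖htld - h‖ ^ 2
      = ‖htld - hp‖ ^ 2 + 2 * ⟪htld - hp, hp - h⟫ + ‖hp - h‖ ^ 2 := by
    have : htld - h = (htld - hp) + (hp - h) := by abel
    rw [this, norm_add_sq_real]
  have hnorm2 : ‖htld - h‖ ^ 2 = μ ^ 2 * ‖h - hm‖ ^ 2 := by
    have : htld - h = μ • (h - hm) := by rw [htld_def]; abel
    rw [this, norm_smul, Real.norm_eq_abs, mul_pow, sq_abs]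
  -- δ bound
  have hδ2 : α * ‖δ‖ ≤ Real.sqrt (2 * α * ε) := by
    have h1 : α * Real.sqrt (2 * ε / α) = Real.sqrt (2 * α * ε) := by
      rw [← Real.sqrt_sq hα.le, ← Real.sqrt_mul (sq_nonneg α)]
      congr 1
      field_simp
      rw [Real.sq_sqrt (sq_nonneg α)]
      ring
    calc α * ‖δ‖ ≤ α * Real.sqrt (2 * ε / α) :=
          mul_le_mul_of_nonneg_left hδ hα.le
      _ = Real.sqrt (2 * α * ε) := h1
  have hδ3 : -(α * ⟪δ, hp - h⟫) ≤ Real.sqrt (2 * α * ε) * ‖hp - h‖ := by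
    have h1 : -⟪δ, hp - h⟫ ≤ ‖δ‖ * ‖hp - h‖ := by
      have := abs_real_inner_le_norm δ (hp - h)
      have := neg_abs_le ⟪δ, hp - h⟫
      linarith
    calc -(α * ⟪δ, hp - h⟫) = α * (-⟪δ, hp - h⟫) := by ring
      _ ≤ α * (‖δ‖ * ‖hp - h‖) := mul_le_mul_of_nonneg_left h1 hα.le
      _ = (α * ‖δ‖) * ‖hp - h‖ := by ring
      _ ≤ Real.sqrt (2 * α * ε) * ‖hp - h‖ :=
          mul_le_mul_of_nonneg_right hδ2 (norm_nonneg _)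
  -- rewrite inner products with reversed sign arguments
  have hinner_split : ⟪γ' htld, h - htld⟫ = ⟪γ' htld, h - hp⟫ + ⟪γ' htld, hp - htld⟫ := by
    have he : h - htld = (h - hp) + (hp - htld) := by abel
    rw [he, inner_add_right]
  have hflip : ⟪htld - hp, h - hp⟫ = -⟪htld - hp, hp - h⟫ := by
    have he : h - hp = -(hp - h) := by abel
    rw [he, inner_neg_right]
  have hflipδ : ⟪δ, h - hp⟫ = -⟪δ, hp - h⟫ := by
    have he : h - hp = -(hp - h) := by abel
    rw [he, inner_neg_right]
  have hns : ‖hp - htld‖ = ‖htld - hp‖ := norm_sub_rev _ _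
  rw [hCexp, hflip, hflipδ] at hC
  rw [hinner_split] at hA
  rw [hns] at hB
  have hscaled : α / 2 * (μ ^ 2 * ‖h - hm‖ ^ 2)
      = α / 2 * ‖htld - hp‖ ^ 2 + α * ⟪htld - hp, hp - h⟫ + α / 2 * ‖hp - h‖ ^ 2 := by
    rw [← hnorm2, hnorm]
    ring
  linarith [hA, hB, hC, hδ3, hscaled]
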